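/- Let k be an integer with 1 ≤ k ≤ n(q-1) such that k ≡ 0 (mod q-1), and let ℓ = n(q-1) − k. Then the dual code of C_{n,k}^q equals the 𝔽_q-span of the all-ones vector 𝟏 together with C_{n,ℓ}^q. -/

import Mathlib

open scoped BigOperators

/-- A vector in `F^(n+1)` is a standard representative if its leftmost nonzero
coordinate equals `1`. -/
def IsStdRep {F : Type*} [Field F] {n : ℕ} (v : Fin (n + 1) → F) : Prop :=
  ∃ i, (∀ j, j < i → v j = 0) ∧ v i = 1

/-- The set of standard affine representatives of the points of projective n-space. -/
abbrev ProjPts (F : Type*) [Field F] (n : ℕ) : Type _ :=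
  {v : Fin (n + 1) → F // IsStdRep v}

noncomputable instance {F : Type*} [Field F] [Fintype F] {n : ℕ} :
    Fintype (ProjPts F n) := Fintype.ofFinite _

/-- Evaluation of a polynomial at the standard representatives, as a linear map. -/
noncomputable def evalOnPts (F : Type*) [Field F] [Fintype F] (n : ℕ) :
    MvPolynomial (Fin (n + 1)) F →ₗ[F] (ProjPts F n → F) where
  toFun f := fun p => MvPolynomial.eval p.1 f
  map_add' f g := by ext p; simp
  map_smul' c f := by ext p; simp [MvPolynomial.smul_eval]

/-- The projective Reed–Muller code `C_{n,k}^q`: evaluations of homogeneous degree-`k`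
polynomials at the standard representatives of the points of `ℙ^n(F)`. -/
noncomputable def PRM (F : Type*) [Field F] [Fintype F] (n k : ℕ) :
    Submodule F (ProjPts F n → F) :=
  Submodule.map (evalOnPts F n) (MvPolynomial.homogeneousSubmodule (Fin (n + 1)) F k)

/-- The dual code with respect to the standard bilinear form. -/
noncomputable def dualCode {F : Type*} [Field F] [Fintype F] {n : ℕ}
    (C : Submodule F (ProjPts F n → F)) : Submodule F (ProjPts F n → F) where
  carrier := {y | ∀ c ∈ C, ∑ p : ProjPts F n, y p * c p = 0}
  zero_mem' := by intro c hc; simp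
  add_mem' := by
    intro a b ha hb c hc
    show ∑ p : ProjPts F n, (a + b) p * c p = 0
    simp only [Pi.add_apply, add_mul, Finset.sum_add_distrib, ha c hc, hb c hc, add_zero]
  smul_mem' := by
    intro r a ha c hc
    show ∑ p : ProjPts F n, (r • a) p * c p = 0
    simp only [Pi.smul_apply, smul_eq_mul, mul_assoc, ← Finset.mul_sum, ha c hc, mul_zero]

namespace PRMAux
open MvPolynomial Finset
set_option linter.unusedSectionVars false
set_option linter.unusedVariables false
section
universe u
variable {K : Type u} [Field K] [Fintype K]

/-- universe-polymorphic version of `MvPolynomial.eq_zero_of_eval_eq_zero` -/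
lemma eq_zero_of_eval_eq_zero' {m : ℕ} (P : MvPolynomial (Fin m) K)
    (h : ∀ v : Fin m → K, MvPolynomial.eval v P = 0)
    (hP : P ∈ MvPolynomial.restrictDegree (Fin m) K (Fintype.card K - 1)) : P = 0 := by
  classical
  let e : ULift.{u} (Fin m) ≃ Fin m := Equiv.ulift
  set Q : MvPolynomial (ULift.{u} (Fin m)) K := MvPolynomial.rename e.symm P with hQ
  have hQ0 : Q = 0 := by
    apply MvPolynomial.eq_zero_of_eval_eq_zero (σ := ULift.{u} (Fin m)) (K := K) Q
    · intro w
      rw [hQ, MvPolynomial.eval_rename]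
      exact h _
    · rw [MvPolynomial.mem_restrictDegree] at hP ⊢
      intro s hs i
      rw [hQ, MvPolynomial.support_rename_of_injective e.symm.injective] at hs
      obtain ⟨μ, hμ, rfl⟩ := Finset.mem_image.mp hs
      have : (Finsupp.mapDomain (⇑e.symm) μ) i = μ (e i) := by
        have := Finsupp.mapDomain_apply e.symm.injective μ (e i)
        simpa using this
      rw [this]
      exact hP μ hμ (e i)
  have : MvPolynomial.rename e.symm P = MvPolynomial.rename e.symm 0 := by
    rw [map_zero]; exact hQ0
  exact MvPolynomial.rename_injective _ e.symm.injective this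

end
section
variable {F : Type*} [Field F] [Fintype F] [DecidableEq F] {n : ℕ}


open MvPolynomial Finset
set_option linter.unusedSectionVars false

variable {F : Type*} [Field F] [Fintype F] [DecidableEq F] {n : ℕ}

lemma isStdRep_ne_zero {v : Fin (n + 1) → F} (h : IsStdRep v) : v ≠ 0 := by
  obtain ⟨i, -, hi⟩ := h
  intro h0
  rw [h0] at hi
  simp at hi

lemma lead_aux {v : Fin (n + 1) → F} (hv : v ≠ 0) :
    (Finset.univ.filter fun i => v i ≠ 0).Nonempty := by
  obtain ⟨i, hi⟩ := Function.ne_iff.mp hv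
  exact ⟨i, by simpa using hi⟩

/-- index of the leftmost nonzero coordinate -/
noncomputable def lead (v : Fin (n + 1) → F) (hv : v ≠ 0) : Fin (n + 1) :=
  (Finset.univ.filter fun i => v i ≠ 0).min' (lead_aux hv)

lemma lead_ne_zero {v : Fin (n + 1) → F} (hv : v ≠ 0) : v (lead v hv) ≠ 0 := by
  have := Finset.min'_mem _ (lead_aux hv)
  simpa [lead] using this

lemma eq_zero_of_lt_lead {v : Fin (n + 1) → F} (hv : v ≠ 0) {j : Fin (n + 1)}
    (hj : j < lead v hv) : v j = 0 := by
  by_contra h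
  have : lead v hv ≤ j := Finset.min'_le _ _ (by simpa using h)
  exact absurd hj (not_lt.mpr this)

lemma lead_eq {v : Fin (n + 1) → F} (hv : v ≠ 0) {i : Fin (n + 1)}
    (h0 : ∀ j, j < i → v j = 0) (hi : v i ≠ 0) : lead v hv = i := by
  have h1 : lead v hv ≤ i := Finset.min'_le _ _ (by simpa using hi)
  have h2 : ¬ lead v hv < i := fun hlt => lead_ne_zero hv (h0 _ hlt)
  exact le_antisymm h1 (not_lt.mp h2)

lemma stdRep_lead {v : Fin (n + 1) → F} (h : IsStdRep v) :
    v (lead v (isStdRep_ne_zero h)) = 1 := by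
  obtain ⟨i, h0, hi⟩ := h
  rw [lead_eq _ h0 (by rw [hi]; exact one_ne_zero)]
  exact hi

/-- normalization of a nonzero vector -/
noncomputable def normalize (v : Fin (n + 1) → F) (hv : v ≠ 0) : ProjPts F n :=
  ⟨(v (lead v hv))⁻¹ • v, by
    refine ⟨lead v hv, fun j hj => ?_, ?_⟩
    · simp [eq_zero_of_lt_lead hv hj]
    · simp [inv_mul_cancel₀ (lead_ne_zero hv)]⟩

/-- the basic structure of the point set: nonzero vectors are uniquely
`t • p` with `t` a unit and `p` a standard representative. -/
noncomputable def unitsEquiv (F : Type*) [Field F] [Fintype F] [DecidableEq F] (n : ℕ) :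
    Fˣ × ProjPts F n ≃ {v : Fin (n + 1) → F // v ≠ 0} where
  toFun tp := ⟨(tp.1 : F) • tp.2.1, smul_ne_zero tp.1.ne_zero (isStdRep_ne_zero tp.2.2)⟩
  invFun v := (Units.mk0 (v.1 (lead v.1 v.2)) (lead_ne_zero v.2), normalize v.1 v.2)
  left_inv := by
    rintro ⟨t, p⟩
    have hp := isStdRep_ne_zero p.2
    have hw : (t : F) • p.1 ≠ 0 := smul_ne_zero t.ne_zero hp
    have hl : lead ((t : F) • p.1) hw = lead p.1 hp := by
      refine lead_eq hw (fun j hj => ?_) ?_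
      · simp [eq_zero_of_lt_lead hp hj]
      · simp only [Pi.smul_apply, smul_eq_mul]
        exact mul_ne_zero t.ne_zero (lead_ne_zero hp)
    have hval : ((t : F) • p.1) (lead ((t : F) • p.1) hw) = (t : F) := by
      rw [hl]; simp [stdRep_lead p.2]
    ext : 1
    · exact Units.ext (by simpa using hval)
    · show normalize ((t : F) • p.1) hw = p
      apply Subtype.ext
      show (((t : F) • p.1) (lead ((t : F) • p.1) hw))⁻¹ • ((t : F) • p.1) = p.1
      rw [hval, inv_smul_smul₀ t.ne_zero]
  right_inv := by
    rintro ⟨v, hv⟩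
    apply Subtype.ext
    show (v (lead v hv)) • ((v (lead v hv))⁻¹ • v) = v
    rw [smul_inv_smul₀ (lead_ne_zero hv)]

/-- decomposition of a sum over all vectors -/
lemma sum_decompose (f : (Fin (n + 1) → F) → F) :
    ∑ v : Fin (n + 1) → F, f v = f 0 + ∑ t : Fˣ, ∑ p : ProjPts F n, f ((t : F) • p.1) := by
  classical
  have h1 : ∑ v : Fin (n + 1) → F, f v
      = f 0 + ∑ v ∈ Finset.univ.erase 0, f v :=
    (Finset.add_sum_erase _ f (Finset.mem_univ 0)).symm
  have h2 : ∑ v ∈ Finset.univ.erase 0, f v = ∑ v : {v : Fin (n + 1) → F // v ≠ 0}, f v.1 := by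
    refine (Finset.sum_subtype _ (fun x => ?_) f)
    simp
  have h3 : ∑ v : {v : Fin (n + 1) → F // v ≠ 0}, f v.1
      = ∑ tp : Fˣ × ProjPts F n, f ((tp.1 : F) • tp.2.1) :=
    (Fintype.sum_equiv (unitsEquiv F n) _ _ (fun tp => rfl)).symm
  rw [h1, h2, h3, Fintype.sum_prod_type]


end
section
open MvPolynomial Finset
variable {F : Type*} [Field F] [Fintype F] [DecidableEq F] {n : ℕ}
set_option linter.unusedSectionVars false

lemma sum_units_pow (j : ℕ) :
    ∑ t : Fˣ, (t : F) ^ j = if (Fintype.card F - 1) ∣ j then (-1 : F) else 0 := by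
  simpa [Units.val_pow_eq_pow_val] using FiniteField.sum_pow_units F j

lemma sum_pow_F (j : ℕ) (hj : j ≠ 0) :
    ∑ t : F, t ^ j = if (Fintype.card F - 1) ∣ j then (-1 : F) else 0 := by
  classical
  have h0 : ∑ t : F, t ^ j = (0 : F) ^ j + ∑ t ∈ Finset.univ.erase 0, t ^ j :=
    (Finset.add_sum_erase _ _ (Finset.mem_univ 0)).symm
  have h1 : ∑ t ∈ Finset.univ.erase 0, t ^ j = ∑ t : {a : F // a ≠ 0}, t.1 ^ j :=
    Finset.sum_subtype _ (by simp) _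
  have h2 : ∑ t : {a : F // a ≠ 0}, t.1 ^ j = ∑ t : Fˣ, (t : F) ^ j :=
    (Fintype.sum_equiv unitsEquivNeZero _ _ (fun t => rfl)).symm
  rw [h0, h1, h2, zero_pow hj, zero_add, sum_units_pow]

lemma sum_pow_F_zero {j : ℕ} (h : j = 0 ∨ ¬ (Fintype.card F - 1) ∣ j) :
    ∑ t : F, t ^ j = 0 := by
  rcases h with h | h
  · subst h
    simp [Finset.sum_const, FiniteField.cast_card_eq_zero]
  · have hj : j ≠ 0 := fun h0 => h (h0 ▸ dvd_zero _)
    rw [sum_pow_F j hj, if_neg h]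

lemma sum_monomial_eval (a : Fin (n + 1) → ℕ) :
    ∑ v : Fin (n + 1) → F, ∏ i, v i ^ a i = ∏ i, ∑ t : F, t ^ a i := by
  rw [show (∏ i, ∑ t : F, t ^ a i) = ∏ i, ∑ t ∈ Finset.univ, t ^ a i from rfl,
    Finset.prod_univ_sum, Fintype.piFinset_univ]

lemma sum_monomial_eval_eq_zero (a : Fin (n + 1) → ℕ)
    (ha : ∑ i, a i ≤ n * (Fintype.card F - 1)) :
    ∑ v : Fin (n + 1) → F, ∏ i, v i ^ a i = 0 := by
  have hq2 : 2 ≤ Fintype.card F := Fintype.one_lt_card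
  rw [sum_monomial_eval]
  by_cases hall : ∀ i, a i ≠ 0 ∧ (Fintype.card F - 1) ∣ a i
  · exfalso
    have hle : ∀ i, Fintype.card F - 1 ≤ a i := fun i =>
      Nat.le_of_dvd (Nat.pos_of_ne_zero (hall i).1) (hall i).2
    have hsum : (n + 1) * (Fintype.card F - 1) ≤ ∑ i, a i := by
      calc (n + 1) * (Fintype.card F - 1) = ∑ _i : Fin (n + 1), (Fintype.card F - 1) := by
            simp [Finset.sum_const, mul_comm]
        _ ≤ ∑ i, a i := Finset.sum_le_sum fun i _ => hle i
    have : 1 ≤ Fintype.card F - 1 := by omega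
    nlinarith [hsum, ha]
  · push_neg at hall
    obtain ⟨i, hi⟩ := hall
    refine Finset.prod_eq_zero (Finset.mem_univ i) (sum_pow_F_zero ?_)
    by_cases h0 : a i = 0
    · exact Or.inl h0
    · exact Or.inr (hi h0)

lemma degree_univ (μ : Fin (n + 1) →₀ ℕ) : ∑ i, μ i = Finsupp.degree μ :=
  (Finset.sum_subset (Finset.subset_univ _)
    (fun i _ h => Finsupp.notMem_support_iff.mp h)).symm

lemma homog_degree {f : MvPolynomial (Fin (n + 1)) F} {d : ℕ} (hf : f.IsHomogeneous d)
    {μ : Fin (n + 1) →₀ ℕ} (hμ : μ ∈ f.support) : ∑ i, μ i = d := by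
  rw [degree_univ]
  by_contra h
  exact (MvPolynomial.mem_support_iff.mp hμ) (hf.coeff_eq_zero h)

lemma sum_eval_affine {f : MvPolynomial (Fin (n + 1)) F} {d : ℕ} (hf : f.IsHomogeneous d)
    (hd : d ≤ n * (Fintype.card F - 1)) :
    ∑ v : Fin (n + 1) → F, MvPolynomial.eval v f = 0 := by
  simp_rw [MvPolynomial.eval_eq']
  rw [Finset.sum_comm]
  apply Finset.sum_eq_zero
  intro μ hμ
  rw [← Finset.mul_sum]
  rw [sum_monomial_eval_eq_zero (fun i => μ i) (by rw [homog_degree hf hμ]; exact hd), mul_zero]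

lemma eval_smul_homog {f : MvPolynomial (Fin (n + 1)) F} {d : ℕ} (hf : f.IsHomogeneous d)
    (t : F) (v : Fin (n + 1) → F) :
    MvPolynomial.eval (t • v) f = t ^ d * MvPolynomial.eval v f := by
  rw [MvPolynomial.eval_eq', MvPolynomial.eval_eq', Finset.mul_sum]
  apply Finset.sum_congr rfl
  intro μ hμ
  simp only [Pi.smul_apply, smul_eq_mul, mul_pow]
  rw [Finset.prod_mul_distrib, Finset.prod_pow_eq_pow_sum, homog_degree hf hμ]
  ring

lemma sum_eval_proj {f : MvPolynomial (Fin (n + 1)) F} {d : ℕ} (hf : f.IsHomogeneous d)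
    (hd1 : 1 ≤ d) (hd2 : d ≤ n * (Fintype.card F - 1)) (hdvd : (Fintype.card F - 1) ∣ d) :
    ∑ p : ProjPts F n, MvPolynomial.eval p.1 f = 0 := by
  have h0 : MvPolynomial.eval (0 : Fin (n + 1) → F) f = 0 := by
    have := eval_smul_homog hf 0 0
    rw [zero_smul] at this
    rw [this, zero_pow (by omega), zero_mul]
  have haff := sum_eval_affine hf hd2
  rw [sum_decompose (fun v => MvPolynomial.eval v f), h0, zero_add] at haff
  simp_rw [eval_smul_homog hf] at haff
  rw [← Finset.sum_mul_sum, sum_units_pow, if_pos hdvd] at haff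
  rw [neg_one_mul, neg_eq_zero] at haff
  exact haff

end
section
open MvPolynomial Finset
set_option linter.unusedSectionVars false

variable (F : Type*) [Field F] [Fintype F] [DecidableEq F] (n : ℕ)

/-- reduced exponent vectors -/
def box : Finset (Fin (n + 1) → ℕ) := Fintype.piFinset fun _ => Finset.range (Fintype.card F)

/-- reduced exponent vectors with degree divisible by `q - 1` -/
def ZFull : Finset (Fin (n + 1) → ℕ) :=
  (box F n).filter fun a => (Fintype.card F - 1) ∣ ∑ i, a i

def Zset : Finset (Fin (n + 1) → ℕ) := (ZFull F n).erase 0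

def Mset (k : ℕ) : Finset (Fin (n + 1) → ℕ) := (Zset F n).filter fun a => ∑ i, a i ≤ k

/-- the monomial function on the projective point set -/
def psi (a : Fin (n + 1) → ℕ) : ProjPts F n → F := fun p => ∏ i, p.1 i ^ a i

variable {F n}

lemma mem_box {a : Fin (n + 1) → ℕ} : a ∈ box F n ↔ ∀ i, a i ≤ Fintype.card F - 1 := by
  have h1 : 0 < Fintype.card F := Fintype.card_pos
  simp only [box, Fintype.mem_piFinset, Finset.mem_range]
  exact forall_congr' fun i => by omega

lemma mem_ZFull {a : Fin (n + 1) → ℕ} :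
    a ∈ ZFull F n ↔ (∀ i, a i ≤ Fintype.card F - 1) ∧ (Fintype.card F - 1) ∣ ∑ i, a i := by
  simp [ZFull, mem_box]

lemma mem_Zset {a : Fin (n + 1) → ℕ} :
    a ∈ Zset F n ↔ a ≠ 0 ∧ (∀ i, a i ≤ Fintype.card F - 1) ∧
      (Fintype.card F - 1) ∣ ∑ i, a i := by
  simp [Zset, mem_ZFull, and_assoc]

lemma mem_Mset {k : ℕ} {a : Fin (n + 1) → ℕ} :
    a ∈ Mset F n k ↔ (a ≠ 0 ∧ (∀ i, a i ≤ Fintype.card F - 1) ∧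
      (Fintype.card F - 1) ∣ ∑ i, a i) ∧ ∑ i, a i ≤ k := by
  simp [Mset, mem_Zset]

lemma pow_raise (x : F) (e m : ℕ) (he : e ≠ 0) :
    x ^ (e + (Fintype.card F - 1) * m) = x ^ e := by
  rcases eq_or_ne x 0 with rfl | hx
  · rw [zero_pow he, zero_pow (by omega)]
  · rw [pow_add, pow_mul, FiniteField.pow_card_sub_one_eq_one x hx, one_pow, mul_one]

lemma pow_eq_one_of_dvd (t : F) (ht : t ≠ 0) {j : ℕ} (hd : (Fintype.card F - 1) ∣ j) :
    t ^ j = 1 := by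
  obtain ⟨m, rfl⟩ := hd
  rw [pow_mul, FiniteField.pow_card_sub_one_eq_one t ht, one_pow]

lemma psi_zero : psi F n (0 : Fin (n + 1) → ℕ) = fun _ => (1 : F) := by
  funext p; simp [psi]

lemma psi_mem_PRM {k : ℕ} {a : Fin (n + 1) → ℕ} (h0 : a ≠ 0)
    (hle : ∑ i, a i ≤ k) (hdvd : (Fintype.card F - 1) ∣ (k - ∑ i, a i)) :
    psi F n a ∈ PRM F n k := by
  obtain ⟨i₀, hi₀⟩ := Function.ne_iff.mp h0
  obtain ⟨m, hm⟩ := hdvd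
  set b : Fin (n + 1) → ℕ := fun i => a i + (if i = i₀ then (Fintype.card F - 1) * m else 0)
    with hb
  have hbsum : ∑ i, b i = k := by
    rw [hb]
    rw [Finset.sum_add_distrib, Finset.sum_ite_eq' Finset.univ i₀
      (fun _ => (Fintype.card F - 1) * m)]
    simp only [Finset.mem_univ, if_true]
    omega
  refine Submodule.mem_map.mpr
    ⟨MvPolynomial.monomial (Finsupp.equivFunOnFinite.symm b) 1, ?_, ?_⟩
  · rw [MvPolynomial.mem_homogeneousSubmodule]
    apply MvPolynomial.isHomogeneous_monomial
    rw [← degree_univ]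
    simpa using hbsum
  · funext p
    show MvPolynomial.eval p.1 _ = psi F n a p
    rw [MvPolynomial.eval_monomial, one_mul, Finsupp.prod_pow]
    simp only [Finsupp.coe_equivFunOnFinite_symm]
    apply Finset.prod_congr rfl
    intro i _
    by_cases h : i = i₀
    · subst h
      simp only [hb, if_pos rfl]
      exact pow_raise _ _ _ (by simpa using hi₀)
    · simp [hb, h]


end
section
open MvPolynomial Finset
variable {F : Type*} [Field F] [Fintype F] [DecidableEq F] {n : ℕ}

lemma full_sum : ∑ _i : Fin (n + 1), (Fintype.card F - 1) = (n + 1) * (Fintype.card F - 1) := by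
  simp [Finset.sum_const, mul_comm]

lemma psi_invariant {a : Fin (n + 1) → ℕ} (hdvd : (Fintype.card F - 1) ∣ ∑ i, a i)
    (t : Fˣ) (p : ProjPts F n) :
    ∏ i, ((t : F) • p.1) i ^ a i = psi F n a p := by
  simp only [Pi.smul_apply, smul_eq_mul, mul_pow]
  rw [Finset.prod_mul_distrib, Finset.prod_pow_eq_pow_sum,
    pow_eq_one_of_dvd (t : F) t.ne_zero hdvd, one_mul]
  rfl

/-- key linear independence of the monomial functions on projective space -/
lemma psi_indep {S : Finset (Fin (n + 1) → ℕ)} (hbox : S ⊆ box F n)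
    (hfull : (fun _ => Fintype.card F - 1) ∉ S)
    (hdvd : ∀ a ∈ S, (Fintype.card F - 1) ∣ ∑ i, a i) :
    LinearIndependent F (fun a : S => psi F n (a : Fin (n + 1) → ℕ)) := by
  rw [Fintype.linearIndependent_iff]
  intro g hg
  classical
  set c : (Fin (n + 1) → ℕ) → F := fun a => if h : a ∈ S then g ⟨a, h⟩ else 0 with hc
  set T : (Fin (n + 1) → F) → F := fun v => ∑ a ∈ S, c a * ∏ i, v i ^ a i with hT
  have hcS : ∀ (a : S), c a.1 = g a := by
    intro a; rw [hc]; simp [a.2]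
  have hTP : ∀ p : ProjPts F n, ∑ a ∈ S, c a * psi F n a p = 0 := by
    intro p
    have h1 : ∑ a ∈ S, c a * psi F n a p = ∑ a : S, g a * psi F n a.1 p := by
      rw [← Finset.sum_attach S (fun a => c a * psi F n a p), Finset.univ_eq_attach]
      exact Finset.sum_congr rfl fun a _ => by rw [hcS]
    have h2 := congrFun hg p
    simp only [Finset.sum_apply, Pi.smul_apply, smul_eq_mul, Pi.zero_apply] at h2
    rw [h1, h2]
  have hTX : ∀ v : Fin (n + 1) → F, v ≠ 0 → T v = 0 := by
    intro v hv
    obtain ⟨⟨t, p⟩, htp⟩ := (unitsEquiv F n).surjective ⟨v, hv⟩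
    have hvtp : (t : F) • p.1 = v := congrArg Subtype.val htp
    rw [hT]
    simp only
    rw [← hvtp]
    calc ∑ a ∈ S, c a * ∏ i, ((t : F) • p.1) i ^ a i
        = ∑ a ∈ S, c a * psi F n a p :=
          Finset.sum_congr rfl fun a ha => by rw [psi_invariant (hdvd a ha)]
      _ = 0 := hTP p
  have hzero : ∑ v : Fin (n + 1) → F, T v = 0 := by
    rw [hT]
    simp only
    rw [Finset.sum_comm]
    apply Finset.sum_eq_zero
    intro a ha
    rw [← Finset.mul_sum, sum_monomial_eval]
    have hafull : a ≠ fun _ => Fintype.card F - 1 := by rintro rfl; exact hfull ha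
    obtain ⟨i, hi0⟩ := Function.ne_iff.mp hafull
    have hi : a i ≠ Fintype.card F - 1 := hi0
    have hibd : a i ≤ Fintype.card F - 1 := mem_box.mp (hbox ha) i
    have : ∑ t : F, t ^ a i = 0 := by
      apply sum_pow_F_zero
      by_cases h0 : a i = 0
      · exact Or.inl h0
      · refine Or.inr fun hd => hi ?_
        have := Nat.le_of_dvd (Nat.pos_of_ne_zero h0) hd
        omega
    rw [Finset.prod_eq_zero (Finset.mem_univ i) this, mul_zero]
  have hT0 : T 0 = 0 := by
    have h1 : ∑ v : Fin (n + 1) → F, T v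
        = T 0 + ∑ v ∈ Finset.univ.erase 0, T v :=
      (Finset.add_sum_erase _ _ (Finset.mem_univ 0)).symm
    rw [Finset.sum_eq_zero (fun v hv => hTX v (Finset.ne_of_mem_erase hv)), add_zero] at h1
    rw [← h1, hzero]
  have hTall : ∀ v, T v = 0 := by
    intro v
    rcases eq_or_ne v 0 with rfl | h
    · exact hT0
    · exact hTX v h
  set P : MvPolynomial (Fin (n + 1)) F :=
    ∑ a ∈ S, MvPolynomial.monomial (Finsupp.equivFunOnFinite.symm a) (c a) with hP
  have hPeval : ∀ v, MvPolynomial.eval v P = T v := by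
    intro v
    rw [hP, map_sum]
    apply Finset.sum_congr rfl
    intro a _
    rw [MvPolynomial.eval_monomial, Finsupp.prod_pow]
    simp only [Finsupp.coe_equivFunOnFinite_symm]
  have hPmem : P ∈ MvPolynomial.restrictDegree (Fin (n + 1)) F (Fintype.card F - 1) := by
    rw [MvPolynomial.mem_restrictDegree]
    intro s hs i
    have hsub := MvPolynomial.support_sum (s := S)
      (f := fun a => MvPolynomial.monomial (Finsupp.equivFunOnFinite.symm a) (c a)) hs
    simp only [Finset.mem_biUnion] at hsub
    obtain ⟨a, haS, hsa⟩ := hsub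
    have := MvPolynomial.support_monomial_subset hsa
    rw [Finset.mem_singleton] at this
    subst this
    simpa using mem_box.mp (hbox haS) i
  have hPzero : P = 0 :=
    eq_zero_of_eval_eq_zero' P (fun v => by rw [hPeval, hTall]) hPmem
  intro a
  have hcoeff : MvPolynomial.coeff (Finsupp.equivFunOnFinite.symm a.1) P = g a := by
    rw [hP, MvPolynomial.coeff_sum]
    rw [Finset.sum_eq_single a.1]
    · rw [MvPolynomial.coeff_monomial, if_pos rfl, hcS]
    · intro b hbS hba
      rw [MvPolynomial.coeff_monomial, if_neg]
      exact fun h => hba (Finsupp.equivFunOnFinite.symm.injective h)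
    · intro h
      exact absurd a.2 h
  rw [hPzero, MvPolynomial.coeff_zero] at hcoeff
  exact hcoeff.symm

end
section
open MvPolynomial Finset
variable {F : Type*} [Field F] [Fintype F] [DecidableEq F] {n : ℕ}

lemma card_sub_one_cast : ((Fintype.card F - 1 : ℕ) : F) = -1 := by
  have h1 : 1 ≤ Fintype.card F := Fintype.card_pos
  rw [Nat.cast_sub h1, FiniteField.cast_card_eq_zero, Nat.cast_one, zero_sub]

lemma smul_prod_pow (t : F) (p : Fin (n + 1) → F) (a : Fin (n + 1) → ℕ) :
    ∏ i, (t • p) i ^ a i = t ^ (∑ i, a i) * ∏ i, p i ^ a i := by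
  simp only [Pi.smul_apply, smul_eq_mul, mul_pow]
  rw [Finset.prod_mul_distrib, Finset.prod_pow_eq_pow_sum]

/-- the "missing relation": the constant function 1 is in the span of the
monomial functions indexed by `Zset`. -/
lemma one_mem_span_psi :
    (fun _ : ProjPts F n => (1 : F)) ∈
      Submodule.span F (psi F n '' (Zset F n : Set (Fin (n + 1) → ℕ))) := by
  classical
  have hq2 : 2 ≤ Fintype.card F := Fintype.one_lt_card
  set q1 := Fintype.card F - 1 with hq1
  set expS : Finset (Fin (n + 1)) → (Fin (n + 1) → ℕ) :=
    fun t => fun i => if i ∈ t then q1 else 0 with hexpS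
  have hterm : ∀ (t : Finset (Fin (n + 1))) (p : ProjPts F n),
      (∏ i ∈ t, -(p.1 i ^ q1)) * ∏ _i ∈ tᶜ, (1 : F)
        = (-1 : F) ^ t.card * psi F n (expS t) p := by
    intro t p
    rw [Finset.prod_const_one, mul_one]
    have h1 : ∀ i ∈ t, -(p.1 i ^ q1) = (-1) * p.1 i ^ q1 := fun i _ => by ring
    rw [Finset.prod_congr rfl h1, Finset.prod_mul_distrib, Finset.prod_const]
    congr 1
    have h2 : psi F n (expS t) p = ∏ i, (if i ∈ t then p.1 i ^ q1 else 1) := by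
      apply Finset.prod_congr rfl
      intro i _
      by_cases h : i ∈ t <;> simp [hexpS, h]
    rw [h2, Fintype.prod_ite_mem]
  have hrel : ∀ p : ProjPts F n,
      ∑ t : Finset (Fin (n + 1)), (-1 : F) ^ t.card * psi F n (expS t) p = 0 := by
    intro p
    have hpa := (Fintype.prod_add (fun i => -(p.1 i ^ q1)) (fun _ => (1 : F))).symm
    rw [Finset.sum_congr rfl fun t _ => hterm t p] at hpa
    rw [hpa]
    have hnp := isStdRep_ne_zero p.2
    refine Finset.prod_eq_zero (Finset.mem_univ (lead p.1 hnp)) ?_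
    rw [stdRep_lead p.2, one_pow]
    ring
  have hfun : (fun _ : ProjPts F n => (1 : F))
      = ∑ t ∈ (Finset.univ : Finset (Finset (Fin (n + 1)))).erase ∅,
          (-((-1 : F) ^ t.card)) • psi F n (expS t) := by
    funext p
    have h0 := hrel p
    rw [← Finset.add_sum_erase _ _ (Finset.mem_univ (∅ : Finset (Fin (n + 1))))] at h0
    have hemp : (-1 : F) ^ (∅ : Finset (Fin (n + 1))).card * psi F n (expS ∅) p = 1 := by
      simp [psi, hexpS]
    rw [hemp] at h0
    have h2 : ∑ t ∈ Finset.univ.erase (∅ : Finset (Fin (n + 1))),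
          (-((-1 : F) ^ t.card)) * psi F n (expS t) p
        = - ∑ t ∈ Finset.univ.erase (∅ : Finset (Fin (n + 1))),
            ((-1 : F) ^ t.card) * psi F n (expS t) p := by
      rw [← Finset.sum_neg_distrib]
      exact Finset.sum_congr rfl fun t _ => by ring
    rw [Finset.sum_apply]
    simp only [Pi.smul_apply, smul_eq_mul]
    rw [h2]
    linear_combination h0
  rw [hfun]
  apply Submodule.sum_mem
  intro t ht
  apply Submodule.smul_mem
  apply Submodule.subset_span
  refine ⟨expS t, ?_, rfl⟩
  obtain ⟨i, hi⟩ := Finset.nonempty_of_ne_empty (Finset.ne_of_mem_erase ht)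
  rw [Finset.mem_coe, mem_Zset]
  refine ⟨Function.ne_iff.mpr ⟨i, ?_⟩, fun j => ?_, ?_⟩
  · simp only [hexpS, if_pos hi, Pi.zero_apply]
    omega
  · by_cases h : j ∈ t <;> simp [hexpS, h, hq1]
  · have hsum : ∑ j, expS t j = t.card * q1 := by
      rw [hexpS]
      simp only
      rw [Fintype.sum_ite_mem, Finset.sum_const, smul_eq_mul]
    rw [hsum]
    exact dvd_mul_left _ _

/-- every function on projective space is in the span of the `Zset` monomials -/
lemma top_le_span_psi :
    (⊤ : Submodule F (ProjPts F n → F)) ≤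
      Submodule.span F (psi F n '' (Zset F n : Set (Fin (n + 1) → ℕ))) := by
  classical
  intro y _
  set ext_y : (Fin (n + 1) → F) → F :=
    fun v => if h : v = 0 then 0 else y ((unitsEquiv F n).symm ⟨v, h⟩).2 with hext
  have hinv : ∀ (t : Fˣ) (p : ProjPts F n), ext_y ((t : F) • p.1) = y p := by
    intro t p
    have hne : (t : F) • p.1 ≠ 0 := smul_ne_zero t.ne_zero (isStdRep_ne_zero p.2)
    rw [hext]
    simp only
    rw [dif_neg hne]
    have heq : (⟨(t : F) • p.1, hne⟩ : {v : Fin (n + 1) → F // v ≠ 0})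
        = unitsEquiv F n (t, p) := rfl
    rw [heq, Equiv.symm_apply_apply]
  have hmem : ext_y ∈ (MvPolynomial.restrictDegree (Fin (n + 1)) F
      (Fintype.card F - 1)).map (MvPolynomial.evalₗ F (Fin (n + 1))) := by
    rw [MvPolynomial.map_restrict_dom_evalₗ]
    trivial
  obtain ⟨P, hPdeg, hPev⟩ := hmem
  have hPev' : ∀ v, MvPolynomial.eval v P = ext_y v := fun v => congrFun hPev v
  set c : (Fin (n + 1) → ℕ) → F :=
    fun a => MvPolynomial.coeff (Finsupp.equivFunOnFinite.symm a) P with hc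
  have hbox : ∀ w : Fin (n + 1) → F,
      MvPolynomial.eval w P = ∑ a ∈ box F n, c a * ∏ i, w i ^ a i := by
    intro w
    conv_lhs => rw [← MvPolynomial.support_sum_monomial_coeff P]
    rw [map_sum]
    have hsub : P.support ⊆ (box F n).image (Finsupp.equivFunOnFinite.symm ∘ fun a => a) := by
      intro μ hμ
      refine Finset.mem_image.mpr ⟨fun i => μ i, ?_, ?_⟩
      · rw [mem_box]
        intro i
        exact (MvPolynomial.mem_restrictDegree _ _ _).mp hPdeg μ hμ i
      · exact Finsupp.equivFunOnFinite_symm_coe μ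
    rw [Finset.sum_subset hsub ?_]
    · rw [Finset.sum_image ?_]
      · apply Finset.sum_congr rfl
        intro a _
        rw [MvPolynomial.eval_monomial, Finsupp.prod_pow]
        simp only [Function.comp_apply, Finsupp.coe_equivFunOnFinite_symm, hc]
      · intro a _ b _ h
        exact Finsupp.equivFunOnFinite.symm.injective h
    · intro μ _ hμns
      rw [MvPolynomial.notMem_support_iff.mp hμns, map_zero, map_zero]
  have hy : ∀ p : ProjPts F n, y p = ∑ a ∈ ZFull F n, c a * psi F n a p := by
    intro p
    have h1 : ∑ t : Fˣ, ext_y ((t : F) • p.1) = - y p := by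
      rw [Finset.sum_congr rfl fun t _ => hinv t p, Finset.sum_const, Finset.card_univ,
        Fintype.card_units, nsmul_eq_mul, card_sub_one_cast, neg_one_mul]
    have h2 : ∑ t : Fˣ, ext_y ((t : F) • p.1)
        = ∑ a ∈ box F n, c a * ((∑ t : Fˣ, (t : F) ^ (∑ i, a i)) * psi F n a p) := by
      rw [Finset.sum_congr rfl fun (t : Fˣ) _ => by rw [← hPev' ((t : F) • p.1), hbox]]
      rw [Finset.sum_comm]
      apply Finset.sum_congr rfl
      intro a _
      have hsp : ∀ x : Fˣ, c a * ∏ i, ((x : F) • p.1) i ^ a i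
          = c a * ((x : F) ^ (∑ i, a i) * psi F n a p) := fun x => by
        rw [smul_prod_pow]; rfl
      rw [Finset.sum_congr rfl fun x _ => hsp x, ← Finset.mul_sum, ← Finset.sum_mul]
    have h3 : ∑ a ∈ box F n, c a * ((∑ t : Fˣ, (t : F) ^ (∑ i, a i)) * psi F n a p)
        = - ∑ a ∈ ZFull F n, c a * psi F n a p := by
      rw [ZFull, Finset.sum_filter, ← Finset.sum_neg_distrib]
      apply Finset.sum_congr rfl
      intro a _
      rw [sum_units_pow]
      by_cases h : (Fintype.card F - 1) ∣ ∑ i, a i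
      · rw [if_pos h, if_pos h]; ring
      · rw [if_neg h, if_neg h]; ring
    rw [h2, h3] at h1
    linear_combination h1
  have hyr : y = ∑ a ∈ ZFull F n, c a • psi F n a := by
    funext p
    rw [hy p, Finset.sum_apply]
    simp only [Pi.smul_apply, smul_eq_mul]
  rw [hyr]
  apply Submodule.sum_mem
  intro a ha
  apply Submodule.smul_mem
  rcases eq_or_ne a 0 with rfl | h0
  · rw [psi_zero]
    exact one_mem_span_psi
  · exact Submodule.subset_span ⟨a, Finset.mem_coe.mpr (Finset.mem_erase.mpr ⟨h0, ha⟩), rfl⟩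

end
section
open Finset Module
variable {F : Type*} [Field F] [Fintype F] [DecidableEq F] {n : ℕ}

/-- the dot-product pairing against a subcode, as a linear map -/
noncomputable def pairing (C : Submodule F (ProjPts F n → F)) :
    (ProjPts F n → F) →ₗ[F] (C →ₗ[F] F) :=
  (LinearMap.mk₂ F (fun (y c : ProjPts F n → F) => ∑ p : ProjPts F n, y p * c p)
    (fun a b c => by simp [add_mul, Finset.sum_add_distrib])
    (fun r a c => by simp [Finset.mul_sum, mul_assoc])
    (fun a b c => by simp [mul_add, Finset.sum_add_distrib])
    (fun r a c => by
      simp only [Pi.smul_apply, smul_eq_mul, Finset.mul_sum]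
      exact Finset.sum_congr rfl fun p _ => by ring)).compl₂ C.subtype

lemma ker_pairing (C : Submodule F (ProjPts F n → F)) :
    LinearMap.ker (pairing C) = dualCode C := by
  ext y
  rw [LinearMap.mem_ker]
  constructor
  · intro h c hc
    have := LinearMap.congr_fun h ⟨c, hc⟩
    simpa [pairing] using this
  · intro h
    apply LinearMap.ext
    rintro ⟨c, hc⟩
    simpa [pairing] using h c hc

lemma pairing_surjective (C : Submodule F (ProjPts F n → F)) :
    Function.Surjective (pairing C) := by
  intro ψ
  obtain ⟨g, hg⟩ := LinearMap.exists_extend ψ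
  refine ⟨fun p => g ((Pi.single p 1 : ProjPts F n → F)), ?_⟩
  apply LinearMap.ext
  rintro ⟨c, hc⟩
  show ∑ p : ProjPts F n, g ((Pi.single p 1 : ProjPts F n → F)) * c p = ψ ⟨c, hc⟩
  have h1 : ∀ p : ProjPts F n, g ((Pi.single p 1 : ProjPts F n → F)) * c p
      = g ((Pi.single p (c p) : ProjPts F n → F)) := by
    intro p
    have : (Pi.single p (c p) : ProjPts F n → F) = c p • (Pi.single p 1 : ProjPts F n → F) := by
      funext j
      rcases eq_or_ne j p with rfl | h
      · simp
      · simp [Pi.single_apply, h]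
    rw [this, map_smul, smul_eq_mul, mul_comm]
  rw [Finset.sum_congr rfl fun p _ => h1 p, ← map_sum, Finset.univ_sum_single]
  exact LinearMap.congr_fun hg ⟨c, hc⟩

lemma finrank_dualCode (C : Submodule F (ProjPts F n → F)) :
    finrank F (dualCode C) + finrank F C = Fintype.card (ProjPts F n) := by
  have h := LinearMap.finrank_range_add_finrank_ker (pairing C)
  rw [LinearMap.range_eq_top.mpr (pairing_surjective C), ker_pairing, finrank_top,
    Module.finrank_fintype_fun_eq_card] at h
  have h2 : finrank F (C →ₗ[F] F) = finrank F C := Subspace.dual_finrank_eq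
  omega

end
section
open Finset Module
variable {F : Type*} [Field F] [Fintype F] [DecidableEq F] {n : ℕ}

lemma full_mem_Zset : (fun _ : Fin (n + 1) => Fintype.card F - 1) ∈ Zset F n := by
  have hq2 : 2 ≤ Fintype.card F := Fintype.one_lt_card
  rw [mem_Zset]
  refine ⟨Function.ne_iff.mpr ⟨0, by simp; omega⟩, fun i => le_refl _, ?_⟩
  rw [full_sum]
  exact dvd_mul_left _ _

/-- the complementation bijection count -/
lemma Z_card_split {k : ℕ} (hk1 : 1 ≤ k) (hk2 : k ≤ n * (Fintype.card F - 1))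
    (hkd : (Fintype.card F - 1) ∣ k) :
    (Zset F n).card
      = (Mset F n k).card + (Mset F n (n * (Fintype.card F - 1) - k)).card + 1 := by
  classical
  have hq2 : 2 ≤ Fintype.card F := Fintype.one_lt_card
  set q1 := Fintype.card F - 1 with hq1
  have hq1pos : 1 ≤ q1 := by omega
  set ℓ := n * q1 - k with hℓ
  have hmul : (n + 1) * q1 = n * q1 + q1 := by ring
  set B := (Zset F n).filter (fun a => ¬ ∑ i, a i ≤ k) with hB
  have hsplit : (Mset F n k).card + B.card = (Zset F n).card := by
    rw [Mset, hB]
    exact Finset.card_filter_add_card_filter_not _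
  have hfullB : (fun _ : Fin (n + 1) => q1) ∈ B := by
    rw [hB, Finset.mem_filter]
    refine ⟨full_mem_Zset, ?_⟩
    rw [full_sum]
    push_neg
    rw [← hq1]
    omega
  have hBcard : B.card = (B.erase (fun _ : Fin (n + 1) => q1)).card + 1 := by
    rw [Finset.card_erase_of_mem hfullB]
    have : 1 ≤ B.card := Finset.card_pos.mpr ⟨_, hfullB⟩
    omega
  have hbij : (B.erase (fun _ : Fin (n + 1) => q1)).card = (Mset F n ℓ).card := by
    apply Finset.card_nbij' (fun a => fun i => q1 - a i) (fun b => fun i => q1 - b i)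
    · intro a ha
      rw [Finset.mem_coe, Finset.mem_erase] at ha
      obtain ⟨hafull, haB⟩ := ha
      rw [hB, Finset.mem_filter] at haB
      obtain ⟨haZ, hagt⟩ := haB
      rw [mem_Zset] at haZ
      obtain ⟨ha0, habd, hadvd⟩ := haZ
      push_neg at hagt
      have hsum : ∑ i, (q1 - a i) + ∑ i, a i = (n + 1) * q1 := by
        rw [← Finset.sum_add_distrib]
        rw [Finset.sum_congr rfl fun i _ => Nat.sub_add_cancel (habd i), full_sum]
      have hadge : k + q1 ≤ ∑ i, a i := by
        have hd : q1 ∣ (∑ i, a i - k) := Nat.dvd_sub hadvd hkd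
        have := Nat.le_of_dvd (by omega) hd
        omega
      simp only [Finset.mem_coe]
      rw [mem_Mset]
      refine ⟨⟨?_, fun i => by omega, ?_⟩, ?_⟩
      · obtain ⟨i, hi⟩ := Function.ne_iff.mp hafull
        refine Function.ne_iff.mpr ⟨i, ?_⟩
        have := habd i
        simp only [Pi.zero_apply]
        omega
      · have : ∑ i, (q1 - a i) = (n + 1) * q1 - ∑ i, a i := by omega
        rw [this]
        exact Nat.dvd_sub (dvd_mul_left _ _) hadvd
      · omega
    · intro b hb
      rw [Finset.mem_coe, mem_Mset] at hb
      obtain ⟨⟨hb0, hbbd, hbdvd⟩, hble⟩ := hb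
      have hsum : ∑ i, (q1 - b i) + ∑ i, b i = (n + 1) * q1 := by
        rw [← Finset.sum_add_distrib]
        rw [Finset.sum_congr rfl fun i _ => Nat.sub_add_cancel (hbbd i), full_sum]
      have hℓle : ℓ + k = n * q1 := by omega
      simp only [Finset.mem_coe]
      rw [Finset.mem_erase, hB, Finset.mem_filter, mem_Zset]
      refine ⟨?_, ⟨?_, fun i => by omega, ?_⟩, ?_⟩
      · obtain ⟨i, hi⟩ := Function.ne_iff.mp hb0
        refine Function.ne_iff.mpr ⟨i, ?_⟩
        simp only [Pi.zero_apply] at hi ⊢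
        have := hbbd i
        omega
      · -- nonzero: some coordinate of b is < q1
        have hex : ∃ i, b i < q1 := by
          by_contra hz
          push_neg at hz
          have hgesum : (n + 1) * q1 ≤ ∑ i, b i := by
            calc (n + 1) * q1 = ∑ _i : Fin (n + 1), q1 := (full_sum).symm
              _ ≤ ∑ i, b i := Finset.sum_le_sum fun i _ => hz i
          omega
        obtain ⟨i, hi⟩ := hex
        refine Function.ne_iff.mpr ⟨i, ?_⟩
        simp only [Pi.zero_apply]
        omega
      · have : ∑ i, (q1 - b i) = (n + 1) * q1 - ∑ i, b i := by omega
        rw [this]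
        exact Nat.dvd_sub (dvd_mul_left _ _) hbdvd
      · push_neg
        omega
    · intro a ha
      rw [Finset.mem_coe, Finset.mem_erase, hB, Finset.mem_filter, mem_Zset] at ha
      funext i
      have := ha.2.1.2.1 i
      show q1 - (q1 - a i) = a i
      omega
    · intro b hb
      rw [Finset.mem_coe, mem_Mset] at hb
      funext i
      have := hb.1.2.1 i
      show q1 - (q1 - b i) = b i
      omega
  omega

/-- the number of projective points equals the number of reduced divisible exponents -/
lemma card_proj_eq_Zcard :
    Fintype.card (ProjPts F n) = (Zset F n).card := by
  classical
  have hq2 : 2 ≤ Fintype.card F := Fintype.one_lt_card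
  apply le_antisymm
  · -- spanning
    have h1 : Submodule.span F (psi F n '' ((Zset F n : Set (Fin (n + 1) → ℕ)))) = ⊤ :=
      eq_top_iff.mpr top_le_span_psi
    have h2 : Fintype.card (ProjPts F n) = finrank F (ProjPts F n → F) :=
      (Module.finrank_fintype_fun_eq_card F).symm
    have h3 : Submodule.span F (((Zset F n).image (psi F n) : Finset _) : Set (ProjPts F n → F))
        = ⊤ := by
      rw [Finset.coe_image, h1]
    have h4 := finrank_span_finset_le_card (R := F) ((Zset F n).image (psi F n))
    rw [Set.finrank, h3, finrank_top] at h4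
    calc Fintype.card (ProjPts F n) = finrank F (ProjPts F n → F) := h2
      _ ≤ ((Zset F n).image (psi F n)).card := h4
      _ ≤ (Zset F n).card := Finset.card_image_le
  · -- independence
    set S := insert (0 : Fin (n + 1) → ℕ) ((Zset F n).erase (fun _ => Fintype.card F - 1))
      with hS
    have hScard : S.card = (Zset F n).card := by
      rw [hS, Finset.card_insert_of_notMem, Finset.card_erase_of_mem full_mem_Zset]
      · have : 1 ≤ (Zset F n).card := Finset.card_pos.mpr ⟨_, full_mem_Zset⟩
        omega
      · intro h0
        have := Finset.mem_of_mem_erase h0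
        rw [mem_Zset] at this
        exact this.1 rfl
    have hindep : LinearIndependent F (fun a : S => psi F n (a : Fin (n + 1) → ℕ)) := by
      apply psi_indep
      · intro a ha
        rw [hS, Finset.mem_insert] at ha
        rcases ha with rfl | ha
        · rw [mem_box]; intro i; simp
        · exact (mem_ZFull.mp (Finset.mem_of_mem_erase (Finset.mem_of_mem_erase ha))).1
          |> fun h => mem_box.mpr h
      · intro hfS
        rw [hS, Finset.mem_insert] at hfS
        rcases hfS with h | h
        · have := congrFun h 0
          simp only [Pi.zero_apply] at this
          omega
        · exact (Finset.mem_erase.mp h).1 rfl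
      · intro a ha
        rw [hS, Finset.mem_insert] at ha
        rcases ha with rfl | ha
        · simp
        · exact (mem_Zset.mp (Finset.mem_of_mem_erase ha)).2.2
    have := hindep.fintype_card_le_finrank
    rw [Fintype.card_coe, Module.finrank_fintype_fun_eq_card] at this
    omega

end
end PRMAux
open PRMAux Module in
theorem stmt6 (q n : ℕ) (F : Type*) [Field F] [Fintype F] [DecidableEq F]
    (hq : Fintype.card F = q) (hn : 1 ≤ n) (k : ℕ) (hk1 : 1 ≤ k) (hk2 : k ≤ n * (q - 1))
    (hkd : (q - 1) ∣ k) :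
    dualCode (PRM F n k) =
      Submodule.span F {fun _ : ProjPts F n => (1 : F)} ⊔ PRM F n (n * (q - 1) - k) := by
  classical
  subst hq
  have hq2 : 2 ≤ Fintype.card F := Fintype.one_lt_card
  set ℓ := n * (Fintype.card F - 1) - k with hℓ
  have hℓk : ℓ + k = n * (Fintype.card F - 1) := by omega
  have hdvdnq : (Fintype.card F - 1) ∣ n * (Fintype.card F - 1) := dvd_mul_left _ _
  have hdvdℓ : (Fintype.card F - 1) ∣ ℓ := by
    rw [hℓ]; exact Nat.dvd_sub hdvdnq hkd
  have hfullsum : ∀ m : ℕ, (∑ i : Fin (n + 1), (fun _ : Fin (n + 1) =>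
      Fintype.card F - 1) i ≤ m) → ¬ (m ≤ n * (Fintype.card F - 1)) := by
    intro m hm
    simp only [Finset.sum_const, Finset.card_univ, Fintype.card_fin, smul_eq_mul] at hm
    have h2 : (n + 1) * (Fintype.card F - 1)
        = n * (Fintype.card F - 1) + (Fintype.card F - 1) := by ring
    omega
  have mem_dual : ∀ y : ProjPts F n → F,
      (∀ c ∈ PRM F n k, ∑ p : ProjPts F n, y p * c p = 0) → y ∈ dualCode (PRM F n k) :=
    fun y h => h
  have hDE : Submodule.span F {fun _ : ProjPts F n => (1 : F)} ⊔ PRM F n ℓ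
      ≤ dualCode (PRM F n k) := by
    apply sup_le
    · rw [Submodule.span_le, Set.singleton_subset_iff]
      apply mem_dual
      intro c hc
      obtain ⟨f, hf, rfl⟩ := hc
      simp only [one_mul]
      exact sum_eval_proj ((MvPolynomial.mem_homogeneousSubmodule _ _).mp hf) hk1 hk2 hkd
    · intro y hy
      obtain ⟨g, hg, rfl⟩ := hy
      apply mem_dual
      intro c hc
      obtain ⟨f, hf, rfl⟩ := hc
      have hmul : (g * f).IsHomogeneous (ℓ + k) :=
        ((MvPolynomial.mem_homogeneousSubmodule _ _).mp hg).mul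
          ((MvPolynomial.mem_homogeneousSubmodule _ _).mp hf)
      have hsum := sum_eval_proj hmul (by omega) (by omega) (by rw [hℓk]; exact hdvdnq)
      calc ∑ p : ProjPts F n, (evalOnPts F n g) p * (evalOnPts F n f) p
          = ∑ p : ProjPts F n, MvPolynomial.eval p.1 (g * f) := by
            apply Finset.sum_congr rfl
            intro p _
            rw [map_mul]
            rfl
        _ = 0 := hsum
  have hMk : (Mset F n k).card ≤ finrank F (PRM F n k) := by
    set v : ↥(Mset F n k) → ↥(PRM F n k) := fun a =>
      ⟨psi F n a, by
        have ha := mem_Mset.mp a.2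
        exact psi_mem_PRM ha.1.1 ha.2 (Nat.dvd_sub hkd ha.1.2.2)⟩ with hv
    have hcomp : LinearIndependent F ((PRM F n k).subtype ∘ v) := by
      have heq : (PRM F n k).subtype ∘ v
          = fun a : ↥(Mset F n k) => psi F n (a : Fin (n + 1) → ℕ) := rfl
      rw [heq]
      apply psi_indep
      · intro a ha; exact mem_box.mpr (mem_Mset.mp ha).1.2.1
      · intro hfull
        exact hfullsum k (mem_Mset.mp hfull).2 hk2
      · intro a ha; exact (mem_Mset.mp ha).1.2.2
    have hindep : LinearIndependent F v := LinearIndependent.of_comp _ hcomp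
    have hle := hindep.fintype_card_le_finrank
    rwa [Fintype.card_coe] at hle
  set D := Submodule.span F {fun _ : ProjPts F n => (1 : F)} ⊔ PRM F n ℓ with hD
  have hDge : (Mset F n ℓ).card + 1 ≤ finrank F D := by
    set S := insert (0 : Fin (n + 1) → ℕ) (Mset F n ℓ) with hS
    have h0S : (0 : Fin (n + 1) → ℕ) ∉ Mset F n ℓ := fun h => (mem_Mset.mp h).1.1 rfl
    have hcard : S.card = (Mset F n ℓ).card + 1 := Finset.card_insert_of_notMem h0S
    have hmemD : ∀ a ∈ S, psi F n a ∈ D := by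
      intro a ha
      rw [hS, Finset.mem_insert] at ha
      rcases ha with rfl | ha
      · rw [psi_zero]
        exact SetLike.le_def.mp le_sup_left (Submodule.mem_span_singleton_self _)
      · apply SetLike.le_def.mp le_sup_right
        have h := mem_Mset.mp ha
        exact psi_mem_PRM h.1.1 h.2 (Nat.dvd_sub hdvdℓ h.1.2.2)
    set v : ↥S → ↥D := fun a => ⟨psi F n a, hmemD a a.2⟩ with hv
    have hcomp : LinearIndependent F (D.subtype ∘ v) := by
      have heq : D.subtype ∘ v
          = fun a : ↥S => psi F n (a : Fin (n + 1) → ℕ) := rfl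
      rw [heq]
      apply psi_indep
      · intro a ha
        rw [hS, Finset.mem_insert] at ha
        rcases ha with rfl | ha
        · exact mem_box.mpr fun i => by simp
        · exact mem_box.mpr (mem_Mset.mp ha).1.2.1
      · intro hfull
        rw [hS, Finset.mem_insert] at hfull
        rcases hfull with h | h
        · have h0 := congrFun h 0
          simp only [Pi.zero_apply] at h0
          omega
        · refine hfullsum ℓ (mem_Mset.mp h).2 ?_
          omega
      · intro a ha
        rw [hS, Finset.mem_insert] at ha
        rcases ha with rfl | ha
        · simp
        · exact (mem_Mset.mp ha).1.2.2
    have hindep : LinearIndependent F v := LinearIndependent.of_comp _ hcomp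
    have hle := hindep.fintype_card_le_finrank
    rwa [Fintype.card_coe, hcard] at hle
  have hcount := Z_card_split (F := F) (n := n) hk1 hk2 hkd
  rw [← hℓ] at hcount
  have hNZ := card_proj_eq_Zcard (F := F) (n := n)
  have hdual := finrank_dualCode (PRM F n k)
  have hfinle : finrank F (dualCode (PRM F n k)) ≤ finrank F D := by omega
  exact (Submodule.eq_of_le_of_finrank_le hDE hfinle).symm
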